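/- arXiv:2012.01905 — 3 statements merged into one kernel-verified Lean document; each statement's English description precedes it below -/
import Mathlib

section
/- Let λ₁, λ₂ be elements of a commutative ring and let A be the (m+n)×(m+n) matrix equal to λ₁ times the identity plus λ₂ times the adjacency matrix of the complete bipartite graph K_{m,n}. Then det(A) = λ₁^{m+n} − m·n·λ₁^{m+n−2}·λ₂². -/
open Matrix Finset

def Bmat (R : Type*) [CommRing R] (m n : ℕ) : Matrix (Fin (m + n)) (Fin (m + n)) R :=
  Matrix.of fun i j => if decide ((i : ℕ) < m) = decide ((j : ℕ) < m) then 0 else 1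

lemma card_lt (m n : ℕ) (hn : 1 ≤ n) :
    (Finset.univ.filter (fun j : Fin (m + n) => (j : ℕ) < m)).card = m := by
  have hmlt : m < m + n := by omega
  have : (Finset.univ.filter (fun j : Fin (m + n) => (j : ℕ) < m))
      = Finset.Iio (⟨m, hmlt⟩ : Fin (m + n)) := by
    ext j; simp [Fin.lt_def]
  rw [this, Fin.card_Iio]

lemma field_case {K : Type*} [Field K] (m n : ℕ) (hm : 1 ≤ m) (hn : 1 ≤ n)
    (a b : K) (ha : a ≠ 0) :
    (a • (1 : Matrix (Fin (m + n)) (Fin (m + n)) K) + b • Bmat K m n).det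
      = a ^ (m + n) - (m * n : ℕ) * a ^ (m + n - 2) * b ^ 2 := by
  set N := Fin (m + n)
  set u : N → K := fun i => if (i : ℕ) < m then 1 else 0 with hu
  set v : N → K := fun i => if (i : ℕ) < m then 0 else 1 with hv
  set C : Matrix N (Fin 2) K := Matrix.of fun i k => if k = 0 then b * u i else v i with hC
  set D : Matrix (Fin 2) N K := Matrix.of fun k j => if k = 0 then v j else b * u j with hD
  have hCD : C * D = b • Bmat K m n := by
    ext i j
    simp only [Matrix.mul_apply, Fin.sum_univ_two, hC, hD, Matrix.of_apply,
      Matrix.smul_apply, Bmat, smul_eq_mul]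
    by_cases hi : (i : ℕ) < m <;> by_cases hj : (j : ℕ) < m <;>
      simp [hu, hv, hi, hj] <;> ring
  have huu : ∑ j : N, u j * u j = (m : K) := by
    have : ∀ j : N, u j * u j = if (j : ℕ) < m then (1:K) else 0 := by
      intro j; by_cases h : (j:ℕ) < m <;> simp [hu, h]
    rw [Finset.sum_congr rfl fun j _ => this j, Finset.sum_boole, card_lt m n hn]
  have hvv : ∑ j : N, v j * v j = (n : K) := by
    have h1 : ∀ j : N, v j * v j = if ¬ (j : ℕ) < m then (1:K) else 0 := by
      intro j; by_cases h : (j:ℕ) < m <;> simp [hv, h]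
    rw [Finset.sum_congr rfl fun j _ => h1 j, Finset.sum_boole]
    have h2 : (Finset.univ.filter (fun j : N => ¬ (j : ℕ) < m)).card = n := by
      have := Finset.card_filter_add_card_filter_not
        (s := (Finset.univ : Finset N)) (p := fun j : N => (j : ℕ) < m)
      simp only [card_lt m n hn, Finset.card_univ] at this
      have hc : Fintype.card N = m + n := Fintype.card_fin _
      have hl : (Finset.univ.filter (fun j : N => (j : ℕ) < m)).card = m := card_lt m n hn
      omega
    rw [h2]
  have huv : ∑ j : N, u j * v j = (0 : K) := by
    apply Finset.sum_eq_zero; intro j _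
    by_cases h : (j:ℕ) < m <;> simp [hu, hv, h]
  have hvu : ∑ j : N, v j * u j = (0 : K) := by
    rw [← huv]; exact Finset.sum_congr rfl fun j _ => mul_comm _ _
  have key : a • (1 : Matrix N N K) + b • Bmat K m n = a • ((1 : Matrix N N K) + (a⁻¹ • C) * D) := by
    rw [smul_add, Matrix.smul_mul, smul_smul, mul_inv_cancel₀ ha, one_smul, hCD]
  rw [key, Matrix.det_smul, Matrix.det_one_add_mul_comm]
  have hDC : (1 : Matrix (Fin 2) (Fin 2) K) + D * (a⁻¹ • C)
      = Matrix.of ![![1, a⁻¹ * (n : K)], ![a⁻¹ * (b * b * (m:K)), 1]] := by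
    ext k l
    have pull : ∀ f g : N → K, ∑ x : N, f x * (a⁻¹ * g x) = a⁻¹ * ∑ x : N, f x * g x := by
      intro f g; rw [Finset.mul_sum]; exact Finset.sum_congr rfl fun x _ => by ring
    fin_cases k <;> fin_cases l <;>
      · simp only [Matrix.add_apply, Matrix.mul_apply, Matrix.one_apply, hC, hD,
          Matrix.of_apply, Matrix.smul_apply, smul_eq_mul, Fin.isValue]
        norm_num [Matrix.cons_val_zero, Matrix.cons_val_one]
        rw [pull]
        first
        | (rw [Finset.sum_congr rfl fun x _ => (by ring : v x * (b * u x) = b * (v x * u x)),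
             ← Finset.mul_sum, hvu, mul_zero, mul_zero])
        | (rw [hvv])
        | (rw [Finset.sum_congr rfl fun x _ =>
                 (by ring : b * u x * (b * u x) = (b * b) * (u x * u x)),
             ← Finset.mul_sum, huu])
        | (rw [Finset.sum_congr rfl fun x _ => (by ring : b * u x * v x = b * (u x * v x)),
             ← Finset.mul_sum, huv, mul_zero, mul_zero])
  rw [hDC]
  rw [Matrix.det_fin_two]
  simp only [Matrix.of_apply, Matrix.cons_val', Matrix.cons_val_zero, Matrix.cons_val_one,
    Matrix.head_cons, Matrix.head_fin_const, Matrix.empty_val', Matrix.cons_val_fin_one]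
  have hcard : Fintype.card N = m + n := Fintype.card_fin _
  rw [hcard]
  have hpow : a ^ (m + n) = a ^ (m + n - 2) * a ^ 2 := by
    rw [← pow_add]; congr 1; omega
  field_simp
  rw [hpow]; push_cast; ring

lemma map_comb {R S : Type*} [CommRing R] [CommRing S] (f : R →+* S) (m n : ℕ) (a b : R) :
    (a • (1 : Matrix (Fin (m + n)) (Fin (m + n)) R) + b • Bmat R m n).map f
      = f a • (1 : Matrix (Fin (m + n)) (Fin (m + n)) S) + f b • Bmat S m n := by
  ext i j
  simp only [Matrix.map_apply, Matrix.add_apply, Matrix.smul_apply, smul_eq_mul, Bmat,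
    Matrix.one_apply, Matrix.of_apply, _root_.map_add, _root_.map_mul, apply_ite f,
    _root_.map_one, _root_.map_zero]

lemma generic_case (m n : ℕ) (hm : 1 ≤ m) (hn : 1 ≤ n) :
    letI S := MvPolynomial (Fin 2) ℤ
    ((MvPolynomial.X 0 : S) • (1 : Matrix (Fin (m + n)) (Fin (m + n)) S)
        + (MvPolynomial.X 1 : S) • Bmat S m n).det
      = (MvPolynomial.X 0 : S) ^ (m + n)
        - (m * n : ℕ) * (MvPolynomial.X 0 : S) ^ (m + n - 2) * (MvPolynomial.X 1 : S) ^ 2 := by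
  set S := MvPolynomial (Fin 2) ℤ
  let K := FractionRing S
  have hinj : Function.Injective (algebraMap S K) := IsFractionRing.injective S K
  apply hinj
  rw [RingHom.map_det, RingHom.mapMatrix_apply, map_comb]
  have hX0 : algebraMap S K (MvPolynomial.X 0) ≠ 0 := by
    intro h
    exact MvPolynomial.X_ne_zero 0 (hinj (h.trans (map_zero _).symm))
  rw [field_case m n hm hn _ _ hX0]
  push_cast [map_sub, _root_.map_mul, map_pow, map_natCast]
  congr 3
  exact Nat.cast_mul m n

theorem stmt_7 {R : Type*} [CommRing R] (m n : ℕ) (hm : 1 ≤ m) (hn : 1 ≤ n)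
    (lam1 lam2 : R)
    (B : Matrix (Fin (m + n)) (Fin (m + n)) R)
    (hB : ∀ i j, B i j = if decide ((i : ℕ) < m) = decide ((j : ℕ) < m) then 0 else 1)
    (A : Matrix (Fin (m + n)) (Fin (m + n)) R)
    (hA : A = lam1 • (1 : Matrix (Fin (m + n)) (Fin (m + n)) R) + lam2 • B) :
    A.det = lam1 ^ (m + n) - (m * n : ℕ) * lam1 ^ (m + n - 2) * lam2 ^ 2 := by
  set S := MvPolynomial (Fin 2) ℤ
  let φ : S →+* R := (MvPolynomial.aeval ![lam1, lam2] : S →ₐ[ℤ] R).toRingHom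
  have hφ0 : φ (MvPolynomial.X 0) = lam1 := by
    exact MvPolynomial.aeval_X ![lam1, lam2] 0
  have hφ1 : φ (MvPolynomial.X 1) = lam2 := by
    exact MvPolynomial.aeval_X ![lam1, lam2] 1
  have hBmat : B = Bmat R m n := by
    ext i j; rw [hB]; rfl
  have hmap : ((MvPolynomial.X 0 : S) • (1 : Matrix (Fin (m + n)) (Fin (m + n)) S)
      + (MvPolynomial.X 1 : S) • Bmat S m n).map φ = A := by
    rw [map_comb, hφ0, hφ1, hA, hBmat]
  rw [← hmap, ← RingHom.mapMatrix_apply, ← RingHom.map_det, generic_case m n hm hn]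
  push_cast [map_sub, _root_.map_mul, map_pow, map_natCast, hφ0, hφ1]
  ring
end

section
/- Let λ₁, λ₂ be real numbers with λ₁ⁿ − (n−1)λ₁^{n−2}λ₂² ≠ 0, let A = λ₁·I + λ₂·S where S is the adjacency matrix of the star K_{1,n−1} (n ≥ 3, center 1), and let X = A⁻¹. Then X_{11} − (n−2)·X_{n−1,n} − X_{nn} = 0. -/
private lemma sum_one_special {n : ℕ} (p : Fin n) (x z : ℝ) :
    ∑ k : Fin n, (if k = p then x else z) = x + ((n : ℝ) - 1) * z := by
  have h : ∀ k : Fin n, (if k = p then x else z) = z + (if k = p then x - z else 0) := by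
    intro k; split <;> ring
  rw [Finset.sum_congr rfl (fun k _ => h k), Finset.sum_add_distrib, Finset.sum_const,
    Finset.sum_ite_eq' Finset.univ p (fun _ => x - z)]
  simp [Finset.card_univ]
  ring

private lemma sum_two_special {n : ℕ} (p q : Fin n) (hpq : p ≠ q) (x y z : ℝ) :
    ∑ k : Fin n, (if k = p then x else if k = q then y else z)
      = x + y + ((n : ℝ) - 2) * z := by
  have h : ∀ k : Fin n, (if k = p then x else if k = q then y else z)
      = z + (if k = p then x - z else 0) + (if k = q then y - z else 0) := by
    intro k
    rcases eq_or_ne k p with rfl | hkp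
    · simp [hpq]
    rcases eq_or_ne k q with rfl | hkq
    · simp [hkp]
    · simp [hkp, hkq]
  rw [Finset.sum_congr rfl (fun k _ => h k), Finset.sum_add_distrib, Finset.sum_add_distrib,
    Finset.sum_const, Finset.sum_ite_eq' Finset.univ p (fun _ => x - z),
    Finset.sum_ite_eq' Finset.univ q (fun _ => y - z)]
  simp [Finset.card_univ]
  ring

theorem stmt_9 (n : ℕ) (hn : 3 ≤ n) (lam1 lam2 : ℝ)
    (hD : lam1 ^ n - (n - 1 : ℝ) * lam1 ^ (n - 2) * lam2 ^ 2 ≠ 0)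
    (S : Matrix (Fin n) (Fin n) ℝ)
    (hS : ∀ i j, S i j = if ((i : ℕ) = 0 ∧ (j : ℕ) ≠ 0) ∨ ((j : ℕ) = 0 ∧ (i : ℕ) ≠ 0)
      then 1 else 0)
    (A : Matrix (Fin n) (Fin n) ℝ)
    (hA : A = lam1 • (1 : Matrix (Fin n) (Fin n) ℝ) + lam2 • S)
    (X : Matrix (Fin n) (Fin n) ℝ) (hX : X = A⁻¹) :
    X ⟨0, by omega⟩ ⟨0, by omega⟩ - (n - 2 : ℝ) * X ⟨n - 2, by omega⟩ ⟨n - 1, by omega⟩ -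
      X ⟨n - 1, by omega⟩ ⟨n - 1, by omega⟩ = 0 := by
  have hn0 : 0 < n := by omega
  have hn2 : n - 2 + 2 = n := by omega
  have key : lam1 ^ n - (n - 1 : ℝ) * lam1 ^ (n - 2) * lam2 ^ 2
      = lam1 ^ (n - 2) * (lam1 ^ 2 - ((n : ℝ) - 1) * lam2 ^ 2) := by
    have h1 : lam1 ^ n = lam1 ^ (n - 2) * lam1 ^ 2 := by rw [← pow_add, hn2]
    rw [h1]; ring
  have hl1 : lam1 ≠ 0 := by
    intro h
    apply hD
    rw [key, h, zero_pow (by omega : n - 2 ≠ 0), zero_mul]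
  have hd : lam1 ^ 2 - ((n : ℝ) - 1) * lam2 ^ 2 ≠ 0 := by
    intro h
    apply hD
    rw [key, h, mul_zero]
  set d : ℝ := lam1 ^ 2 - ((n : ℝ) - 1) * lam2 ^ 2 with hd_def
  set e : ℝ := lam1 ^ 2 - ((n : ℝ) - 2) * lam2 ^ 2 with he_def
  set p0 : Fin n := ⟨0, hn0⟩ with hp0
  set B : Matrix (Fin n) (Fin n) ℝ := fun i j =>
    if i = p0 then (if j = p0 then lam1 / d else -lam2 / d)
    else if j = p0 then -lam2 / d
    else if i = j then e / (lam1 * d) else lam2 ^ 2 / (lam1 * d) with hB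
  have hval : ∀ i : Fin n, (i : ℕ) = 0 ↔ i = p0 := by
    intro i; rw [Fin.ext_iff]
  have hAval : ∀ i k : Fin n, A i k =
      lam1 * (if i = k then 1 else 0) +
      lam2 * (if (i = p0 ∧ k ≠ p0) ∨ (k = p0 ∧ i ≠ p0) then 1 else 0) := by
    intro i k
    rw [hA]
    simp only [Matrix.add_apply, Matrix.smul_apply, smul_eq_mul, Matrix.one_apply, hS]
    congr 2
    try simp only [hval, Ne, eq_iff_iff]
    try tauto
  have hAB : A * B = 1 := by
    ext i j
    rw [Matrix.mul_apply, Matrix.one_apply]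
    rcases eq_or_ne i p0 with rfl | hi
    · rcases eq_or_ne j p0 with rfl | hj
      · -- i = j = p0
        have hpt : ∀ k : Fin n, A p0 k * B k p0 =
            if k = p0 then lam1 * (lam1 / d) else lam2 * (-lam2 / d) := by
          intro k
          rcases eq_or_ne k p0 with rfl | hk
          · simp [hAval, hB]
          · simp [hAval, hB, hk, Ne.symm hk]
        rw [Finset.sum_congr rfl (fun k _ => hpt k), sum_one_special]
        rw [if_pos rfl]
        field_simp
        try simp only [hd_def, he_def]
        try ring
      · -- i = p0, j ≠ p0
        have hpt : ∀ k : Fin n, A p0 k * B k j =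
            if k = p0 then lam1 * (-lam2 / d)
            else if k = j then lam2 * (e / (lam1 * d))
            else lam2 * (lam2 ^ 2 / (lam1 * d)) := by
          intro k
          rcases eq_or_ne k p0 with rfl | hk
          · simp [hAval, hB, hj, Ne.symm hj]
          rcases eq_or_ne k j with rfl | hkj
          · simp [hAval, hB, hk, Ne.symm hk, hj, Ne.symm hj]
          · simp [hAval, hB, hk, Ne.symm hk, hj, Ne.symm hj, hkj, Ne.symm hkj]
        rw [Finset.sum_congr rfl (fun k _ => hpt k),
          sum_two_special p0 j (fun h => hj h.symm)]
        rw [if_neg (fun h => hj h.symm)]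
        field_simp
        try simp only [hd_def, he_def]
        try ring
    · rcases eq_or_ne j p0 with rfl | hj
      · -- j = p0, i ≠ p0
        have hpt : ∀ k : Fin n, A i k * B k p0 =
            if k = p0 then lam2 * (lam1 / d)
            else if k = i then lam1 * (-lam2 / d)
            else 0 := by
          intro k
          rcases eq_or_ne k p0 with rfl | hk
          · simp [hAval, hB, hi, Ne.symm hi]
          rcases eq_or_ne k i with rfl | hki
          · simp [hAval, hB, hk, Ne.symm hk]
          · simp [hAval, hB, hk, Ne.symm hk, hi, Ne.symm hi, hki, Ne.symm hki]
        rw [Finset.sum_congr rfl (fun k _ => hpt k), sum_two_special p0 i hi.symm]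
        rw [if_neg hi]
        field_simp
        try simp only [hd_def, he_def]
        try ring
      · rcases eq_or_ne i j with rfl | hij
        · -- i = j ≠ p0
          have hpt : ∀ k : Fin n, A i k * B k i =
              if k = p0 then lam2 * (-lam2 / d)
              else if k = i then lam1 * (e / (lam1 * d))
              else 0 := by
            intro k
            rcases eq_or_ne k p0 with rfl | hk
            · simp [hAval, hB, hi, Ne.symm hi]
            rcases eq_or_ne k i with rfl | hki
            · simp [hAval, hB, hk, Ne.symm hk]
            · simp [hAval, hB, hk, Ne.symm hk, hi, Ne.symm hi, hki, Ne.symm hki]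
          rw [Finset.sum_congr rfl (fun k _ => hpt k), sum_two_special p0 i hi.symm]
          rw [if_pos rfl]
          field_simp
          try simp only [hd_def, he_def]
          try ring
        · -- i ≠ j, both ≠ p0
          have hpt : ∀ k : Fin n, A i k * B k j =
              if k = p0 then lam2 * (-lam2 / d)
              else if k = i then lam1 * (lam2 ^ 2 / (lam1 * d))
              else 0 := by
            intro k
            rcases eq_or_ne k p0 with rfl | hk
            · simp [hAval, hB, hi, Ne.symm hi, hj, Ne.symm hj]
            rcases eq_or_ne k i with rfl | hki
            · simp [hAval, hB, hk, Ne.symm hk, hj, Ne.symm hj, hij, Ne.symm hij]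
            · simp [hAval, hk, Ne.symm hk, hi, Ne.symm hi, hki, Ne.symm hki]
          rw [Finset.sum_congr rfl (fun k _ => hpt k), sum_two_special p0 i hi.symm]
          rw [if_neg hij]
          field_simp
          try simp only [hd_def, he_def]
          try ring
  have hXB : X = B := by rw [hX, Matrix.inv_eq_right_inv hAB]
  rw [hXB]
  have h1 : (⟨0, by omega⟩ : Fin n) = p0 := rfl
  have h2 : (⟨n - 2, by omega⟩ : Fin n) ≠ p0 := by
    simp [Fin.ext_iff, hp0]; omega
  have h3 : (⟨n - 1, by omega⟩ : Fin n) ≠ p0 := by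
    simp [Fin.ext_iff, hp0]; omega
  have h4 : (⟨n - 2, by omega⟩ : Fin n) ≠ (⟨n - 1, by omega⟩ : Fin n) := by
    simp [Fin.ext_iff]; omega
  simp only [hB, h1, h2, h3, h4, if_pos rfl, if_neg h2, if_neg h3, if_neg h4, if_true, if_false]
  field_simp
  try simp only [hd_def, he_def]
  try ring
end

section
/- Let λ₁, λ₂ ∈ ℝ and let A be the 4×4 matrix λ₁·I + λ₂·P where P is the adjacency matrix of the path 1–4–3–2 (i.e., edges {1,4},{4,3},{3,2}). If A is invertible and X = A⁻¹, then X_{13} = X_{24}. -/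
set_option maxHeartbeats 1000000 in
private lemma det4_aux (M : Matrix (Fin 4) (Fin 4) ℝ) :
    M.det = M 0 0 * (M 1 1 * (M 2 2 * M 3 3 - M 2 3 * M 3 2) - M 1 2 * (M 2 1 * M 3 3 - M 2 3 * M 3 1) + M 1 3 * (M 2 1 * M 3 2 - M 2 2 * M 3 1))
      - M 0 1 * (M 1 0 * (M 2 2 * M 3 3 - M 2 3 * M 3 2) - M 1 2 * (M 2 0 * M 3 3 - M 2 3 * M 3 0) + M 1 3 * (M 2 0 * M 3 2 - M 2 2 * M 3 0))
      + M 0 2 * (M 1 0 * (M 2 1 * M 3 3 - M 2 3 * M 3 1) - M 1 1 * (M 2 0 * M 3 3 - M 2 3 * M 3 0) + M 1 3 * (M 2 0 * M 3 1 - M 2 1 * M 3 0))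
      - M 0 3 * (M 1 0 * (M 2 1 * M 3 2 - M 2 2 * M 3 1) - M 1 1 * (M 2 0 * M 3 2 - M 2 2 * M 3 0) + M 1 2 * (M 2 0 * M 3 1 - M 2 1 * M 3 0)) := by
  rw [Matrix.det_succ_row_zero, Fin.sum_univ_four]
  simp only [Matrix.det_fin_three, Matrix.submatrix_apply,
    show Fin.succ (0:Fin 3) = 1 from rfl, show Fin.succ (1:Fin 3) = 2 from rfl,
    show Fin.succ (2:Fin 3) = 3 from rfl,
    show (0:Fin 4).succAbove 0 = 1 by decide, show (0:Fin 4).succAbove 1 = 2 by decide,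
    show (0:Fin 4).succAbove 2 = 3 by decide,
    show (1:Fin 4).succAbove 0 = 0 by decide, show (1:Fin 4).succAbove 1 = 2 by decide,
    show (1:Fin 4).succAbove 2 = 3 by decide,
    show (2:Fin 4).succAbove 0 = 0 by decide, show (2:Fin 4).succAbove 1 = 1 by decide,
    show (2:Fin 4).succAbove 2 = 3 by decide,
    show (3:Fin 4).succAbove 0 = 0 by decide, show (3:Fin 4).succAbove 1 = 1 by decide,
    show (3:Fin 4).succAbove 2 = 2 by decide,
    show ((0:Fin 4):ℕ) = 0 from rfl, show ((1:Fin 4):ℕ) = 1 from rfl,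
    show ((2:Fin 4):ℕ) = 2 from rfl, show ((3:Fin 4):ℕ) = 3 from rfl]
  norm_num
  ring

theorem stmt_19 (lam1 lam2 : ℝ)
    (P : Matrix (Fin 4) (Fin 4) ℝ)
    (hP : P = !![0, 0, 0, 1; 0, 0, 1, 0; 0, 1, 0, 1; 1, 0, 1, 0])
    (A : Matrix (Fin 4) (Fin 4) ℝ)
    (hA : A = lam1 • (1 : Matrix (Fin 4) (Fin 4) ℝ) + lam2 • P)
    (hinv : IsUnit A.det)
    (X : Matrix (Fin 4) (Fin 4) ℝ) (hX : X = A⁻¹) :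
    X 0 2 = X 1 3 := by
  have hA' : A = !![lam1,0,0,lam2; 0,lam1,lam2,0; 0,lam2,lam1,lam2; lam2,0,lam2,lam1] := by
    subst hP hA
    ext i j
    fin_cases i <;> fin_cases j <;> simp [Matrix.one_apply]
  rw [hX, Matrix.inv_def, Matrix.smul_apply, Matrix.smul_apply]
  congr 1
  rw [Matrix.adjugate_apply, Matrix.adjugate_apply, hA']
  have h1 : (!![lam1,0,0,lam2; 0,lam1,lam2,0; 0,lam2,lam1,lam2; lam2,0,lam2,lam1]).updateRow 2 (Pi.single 0 (1:ℝ)) = !![lam1,0,0,lam2; 0,lam1,lam2,0; 1,0,0,0; lam2,0,lam2,lam1] := by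
    ext i j
    fin_cases i <;> fin_cases j <;> simp [Matrix.updateRow_apply, Pi.single_apply, Matrix.vecHead, Matrix.vecTail]
  have h2 : (!![lam1,0,0,lam2; 0,lam1,lam2,0; 0,lam2,lam1,lam2; lam2,0,lam2,lam1]).updateRow 3 (Pi.single 1 (1:ℝ)) = !![lam1,0,0,lam2; 0,lam1,lam2,0; 0,lam2,lam1,lam2; 0,1,0,0] := by
    ext i j
    fin_cases i <;> fin_cases j <;> simp [Matrix.updateRow_apply, Pi.single_apply, Matrix.vecHead, Matrix.vecTail]
  rw [h1, h2, det4_aux, det4_aux]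
  simp [Matrix.vecHead, Matrix.vecTail]
  ring
end
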